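/- Let a ≥ 1 and n = 2^a. Let A_1,…,A_{2a+1} be n×n complex matrices, each unitary and skew-Hermitian, pairwise anticommuting, and irreducible in the sense that every n×n complex matrix commuting with all of A_1,…,A_{2a+1} is a scalar multiple of I_n. Let k ∈ {1,…,2a+1} and let M be an n×n complex matrix such that the family obtained from (A_i) by replacing A_k with M again consists of unitary, skew-Hermitian, pairwise anticommuting matrices and again has the property that every matrix commuting with all of its members is a scalar multiple of I_n. Then M = A_k or M = −A_k. -/

import Mathlib

open Matrix

private lemma cliff_swap_aux (d m : ℕ) (A : Fin m → Matrix (Fin d) (Fin d) ℂ)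
    (x : Matrix (Fin d) (Fin d) ℂ) (s : Fin m → ℂ)
    (h : ∀ i, x * A i = s i • (A i * x)) :
    ∀ l : List (Fin m),
      x * (l.map A).prod = (l.map s).prod • ((l.map A).prod * x) := by
  intro l
  induction l with
  | nil => simp
  | cons i l ih =>
    simp only [List.map_cons, List.prod_cons]
    rw [← mul_assoc, h i, smul_mul_assoc, mul_assoc, ih, mul_smul_comm, smul_smul,
      ← mul_assoc]

private lemma cliff_unit (d m : ℕ) (A : Fin m → Matrix (Fin d) (Fin d) ℂ)
    (hAu : ∀ i, (A i)ᴴ * A i = 1) (hAs : ∀ i, (A i)ᴴ = -(A i)) (i : Fin m) :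
    IsUnit (A i) := by
  have h1 : (-(A i)) * A i = 1 := by rw [← hAs i]; exact hAu i
  have h2 : A i * (-(A i)) = 1 := mul_eq_one_comm.mp h1
  exact ⟨⟨A i, -(A i), h2, h1⟩, rfl⟩

private lemma cliff_gamma_scalar (a : ℕ)
    (C : Fin (2 * a + 1) → Matrix (Fin (2 ^ a)) (Fin (2 ^ a)) ℂ)
    (hCu : ∀ i, (C i)ᴴ * C i = 1)
    (hCs : ∀ i, (C i)ᴴ = -(C i))
    (hCa : ∀ i j, i ≠ j → C i * C j = -(C j * C i))
    (hCirr : ∀ N : Matrix (Fin (2 ^ a)) (Fin (2 ^ a)) ℂ,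
      (∀ i, N * C i = C i * N) → ∃ c : ℂ, N = c • (1 : Matrix (Fin (2 ^ a)) (Fin (2 ^ a)) ℂ)) :
    ∃ γ : ℂ, γ ≠ 0 ∧
      ((List.finRange (2 * a + 1)).map C).prod = γ • (1 : Matrix (Fin (2 ^ a)) (Fin (2 ^ a)) ℂ) := by
  haveI : Nonempty (Fin (2 ^ a)) := ⟨⟨0, Nat.two_pow_pos a⟩⟩
  set Γ := ((List.finRange (2 * a + 1)).map C).prod with hΓ
  have hΓunit : IsUnit Γ := by
    apply List.prod_isUnit
    intro m hm
    rcases List.mem_map.mp hm with ⟨i, _, rfl⟩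
    exact cliff_unit _ _ C hCu hCs i
  -- Γ commutes with all generators
  have hcomm : ∀ j, C j * Γ = Γ * C j := by
    intro j
    have hswap := cliff_swap_aux (2 ^ a) (2 * a + 1) C (C j)
      (fun i => if i = j then (1 : ℂ) else -1)
      (by
        intro i
        show C j * C i = (if i = j then (1 : ℂ) else -1) • (C i * C j)
        by_cases hij : i = j
        · simp [hij]
        · rw [if_neg hij, neg_smul, one_smul]
          exact hCa j i (fun h => hij h.symm))
      (List.finRange (2 * a + 1))
    have hsign : ((List.finRange (2 * a + 1)).map
        (fun i => if i = j then (1 : ℂ) else -1)).prod = 1 := by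
      rw [← Fin.prod_univ_def]
      rw [← Finset.prod_erase_mul _ _ (Finset.mem_univ j)]
      rw [Finset.prod_congr rfl
        (fun i hi => if_neg (Finset.mem_erase.mp hi).1), Finset.prod_const, if_pos rfl, mul_one,
        Finset.card_erase_of_mem (Finset.mem_univ j), Finset.card_univ, Fintype.card_fin]
      norm_num [pow_mul]
    rw [hsign, one_smul] at hswap
    exact hswap
  obtain ⟨γ, hγeq⟩ := hCirr Γ (fun i => (hcomm i).symm)
  refine ⟨γ, ?_, hγeq⟩
  intro h0
  rw [h0, zero_smul] at hγeq
  rw [hγeq] at hΓunit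
  exact zero_ne_one (isUnit_zero_iff.mp hΓunit)

/-- Uniqueness (up to sign) of the replaced generator in an irreducible
representation of the generators of the Clifford algebra `CA_{2a+1}`. -/
theorem clifford_generator_unique_up_to_sign (a : ℕ) (ha : 1 ≤ a)
    (A : Fin (2 * a + 1) → Matrix (Fin (2 ^ a)) (Fin (2 ^ a)) ℂ)
    (hAu : ∀ i, (A i)ᴴ * A i = 1)
    (hAs : ∀ i, (A i)ᴴ = -(A i))
    (hAa : ∀ i j, i ≠ j → A i * A j = -(A j * A i))
    (hAirr : ∀ M : Matrix (Fin (2 ^ a)) (Fin (2 ^ a)) ℂ,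
      (∀ i, M * A i = A i * M) → ∃ c : ℂ, M = c • (1 : Matrix (Fin (2 ^ a)) (Fin (2 ^ a)) ℂ))
    (k : Fin (2 * a + 1)) (M : Matrix (Fin (2 ^ a)) (Fin (2 ^ a)) ℂ)
    (hBu : ∀ i, ((Function.update A k M) i)ᴴ * (Function.update A k M) i = 1)
    (hBs : ∀ i, ((Function.update A k M) i)ᴴ = -((Function.update A k M) i))
    (hBa : ∀ i j, i ≠ j →
      (Function.update A k M) i * (Function.update A k M) j =
        -((Function.update A k M) j * (Function.update A k M) i))
    (hBirr : ∀ N : Matrix (Fin (2 ^ a)) (Fin (2 ^ a)) ℂ,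
      (∀ i, N * (Function.update A k M) i = (Function.update A k M) i * N) →
        ∃ c : ℂ, N = c • (1 : Matrix (Fin (2 ^ a)) (Fin (2 ^ a)) ℂ)) :
    M = A k ∨ M = -(A k) := by
  obtain ⟨γ, hγ, hΓA⟩ := cliff_gamma_scalar a A hAu hAs hAa hAirr
  obtain ⟨δ, hδ, hΓB⟩ := cliff_gamma_scalar a (Function.update A k M) hBu hBs hBa hBirr
  have hk : (k : ℕ) < (List.finRange (2 * a + 1)).length := by
    simpa using k.isLt
  -- split the index list at k
  have hsplit : List.finRange (2 * a + 1) =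
      (List.finRange (2 * a + 1)).take k ++ k :: (List.finRange (2 * a + 1)).drop (k + 1) := by
    conv_lhs => rw [← List.take_append_drop (k : ℕ) (List.finRange (2 * a + 1))]
    rw [List.drop_eq_getElem_cons hk]
    congr 2
    simp [List.getElem_finRange, Fin.ext_iff]
  have hnd := List.nodup_finRange (2 * a + 1)
  rw [hsplit, List.nodup_append] at hnd
  obtain ⟨-, hnd2, hdisj⟩ := hnd
  have hkt1 : ∀ i ∈ (List.finRange (2 * a + 1)).take (k : ℕ), i ≠ k := by
    intro i hi h
    exact hdisj i hi k List.mem_cons_self h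
  have hkt2 : ∀ i ∈ (List.finRange (2 * a + 1)).drop ((k : ℕ) + 1), i ≠ k := by
    intro i hi h
    exact (List.nodup_cons.mp hnd2).1 (h ▸ hi)
  set P := (((List.finRange (2 * a + 1)).take (k : ℕ)).map A).prod with hP
  set Q := (((List.finRange (2 * a + 1)).drop ((k : ℕ) + 1)).map A).prod with hQ
  have hPu : IsUnit P := by
    apply List.prod_isUnit
    intro m hm
    rcases List.mem_map.mp hm with ⟨i, _, rfl⟩
    exact cliff_unit _ _ A hAu hAs i
  have hQu : IsUnit Q := by
    apply List.prod_isUnit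
    intro m hm
    rcases List.mem_map.mp hm with ⟨i, _, rfl⟩
    exact cliff_unit _ _ A hAu hAs i
  -- rewrite the two scalar identities
  have hA' : P * (A k * Q) = γ • 1 := by
    rw [← hΓA]
    conv_rhs => rw [hsplit]
    rw [List.map_append, List.prod_append, List.map_cons, List.prod_cons]
  have hB' : P * (M * Q) = δ • 1 := by
    rw [← hΓB]
    conv_rhs => rw [hsplit]
    rw [List.map_append, List.prod_append, List.map_cons, List.prod_cons]
    congr 1
    · rw [hP]
      congr 1
      exact (List.map_congr_left (fun i hi => Function.update_of_ne (hkt1 i hi) M A)).symm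
    · congr 1
      · exact (Function.update_self k M A).symm
      · rw [hQ]
        congr 1
        exact (List.map_congr_left (fun i hi => Function.update_of_ne (hkt2 i hi) M A)).symm
  -- M = (δ/γ) • A k
  set t : ℂ := δ / γ with htdef
  have hMt : M = t • A k := by
    have key : P * (M * Q) = P * ((t • A k) * Q) := by
      rw [hB', smul_mul_assoc, mul_smul_comm, hA', smul_smul, htdef,
        div_mul_cancel₀ _ hγ]
    have := hPu.mul_left_cancel key
    exact IsUnit.mul_right_cancel hQu this
  -- squares are -1
  have hM2 : M * M = -1 := by
    have h1 := hBu k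
    have h2 := hBs k
    rw [Function.update_self] at h1 h2
    rw [h2, neg_mul] at h1
    linear_combination (norm := abel) -h1
  have hA2 : A k * A k = -1 := by
    have h1 := hAu k
    rw [hAs k, neg_mul] at h1
    linear_combination (norm := abel) -h1
  have ht2 : t * t = 1 := by
    have h := hM2
    rw [hMt, smul_mul_assoc, mul_smul_comm, smul_smul, hA2, smul_neg] at h
    have h1 : (t * t) • (1 : Matrix (Fin (2 ^ a)) (Fin (2 ^ a)) ℂ) = 1 := neg_injective h
    have h2 := Matrix.ext_iff.mpr h1 ⟨0, Nat.two_pow_pos a⟩ ⟨0, Nat.two_pow_pos a⟩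
    simpa using h2
  rcases mul_self_eq_one_iff.mp ht2 with h | h
  · left; rw [hMt, h, one_smul]
  · right; rw [hMt, h, neg_smul, one_smul]
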